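/- For every n ≥ 1 and every ε ∈ [0,1/4], the local part of the system P^{n,ε} of n isotropic ε-PRBs is at most 2^{2n} · Σ_{i=⌈n/2⌉}^{n} C(n,i)·(1−ε)^{n−i}·ε^{i}, where C(n,i) denotes the binomial coefficient. -/

import Mathlib

open Finset

/-- n-bit strings. -/
abbrev Bits (n : ℕ) := Fin n → Bool

/-- A bipartite conditional "box" on n-bit alphabets: `P x y u v` is the
probability of outputs `(x, y)` given inputs `(u, v)`. -/
abbrev Box (n : ℕ) := Bits n → Bits n → Bits n → Bits n → ℝ

/-- `P` is a bipartite conditional probability distribution. -/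
def IsBox {n : ℕ} (P : Box n) : Prop :=
  (∀ x y u v, 0 ≤ P x y u v) ∧
  (∀ u v, ∑ x : Bits n, ∑ y : Bits n, P x y u v = 1)

/-- `P` is non-signalling. -/
def NonSignalling {n : ℕ} (P : Box n) : Prop :=
  (∀ y v u u', ∑ x : Bits n, P x y u v = ∑ x : Bits n, P x y u' v) ∧
  (∀ x u v v', ∑ y : Bits n, P x y u v = ∑ y : Bits n, P x y u v')

/-- The local deterministic box given by response functions `f` (Alice) and `g` (Bob). -/
def detBox {n : ℕ} (f g : Bits n → Bits n) : Box n :=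
  fun x y u v => if x = f u ∧ y = g v then 1 else 0

/-- `P` is local deterministic. -/
def IsLocalDet {n : ℕ} (P : Box n) : Prop :=
  ∃ f g : Bits n → Bits n, P = detBox f g

/-- `P` is local: a convex combination of local deterministic boxes. -/
def IsLocal {n : ℕ} (P : Box n) : Prop :=
  ∃ w : (Bits n → Bits n) × (Bits n → Bits n) → ℝ,
    (∀ fg, 0 ≤ w fg) ∧ (∑ fg, w fg = 1) ∧
    (∀ x y u v, P x y u v =
      ∑ fg : (Bits n → Bits n) × (Bits n → Bits n), w fg * detBox fg.1 fg.2 x y u v)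

/-- The local part of `P`: the maximal weight `p` such that `P` is a convex
combination of a local box (weight `p`) and a non-signalling box (weight `1 - p`). -/
noncomputable def localPart {n : ℕ} (P : Box n) : ℝ :=
  sSup {p : ℝ | 0 ≤ p ∧ p ≤ 1 ∧
    ∃ PL PNS : Box n, IsBox PL ∧ IsLocal PL ∧ IsBox PNS ∧ NonSignalling PNS ∧
      ∀ x y u v, P x y u v = p * PL x y u v + (1 - p) * PNS x y u v}

/-- Single-copy isotropic ε-PRB entries. -/
noncomputable def isoPRB1 (ε : ℝ) (x y u v : Bool) : ℝ :=
  if xor x y = (u && v) then (1 - ε) / 2 else ε / 2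

/-- The system of n independent isotropic ε-PRBs. -/
noncomputable def isoPRB (n : ℕ) (ε : ℝ) : Box n :=
  fun x y u v => ∏ i : Fin n, isoPRB1 ε (x i) (y i) (u i) (v i)

/-- Single-copy maximally biased δ-PRB entries. -/
noncomputable def biasedPRB1 (δ : ℝ) (x y u v : Bool) : ℝ :=
  if u && v then
    match x, y with
    | false, false => 0
    | true,  false => 1 / 2 - δ / 2
    | false, true  => 1 / 2 + δ / 2
    | true,  true  => 0
  else
    match x, y with
    | false, false => 1 / 2 - δ / 2
    | true,  false => 0
    | false, true  => δ
    | true,  true  => 1 / 2 - δ / 2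

/-- The system of n independent maximally biased δ-PRBs. -/
noncomputable def biasedPRB (n : ℕ) (δ : ℝ) : Box n :=
  fun x y u v => ∏ i : Fin n, biasedPRB1 δ (x i) (y i) (u i) (v i)


section Auxiliary

variable {n : ℕ}

/-- The set of coordinates in which the outcome loses the CHSH condition. -/
def lossSet (x y u v : Bits n) : Finset (Fin n) :=
  Finset.univ.filter (fun i => xor (x i) (y i) ≠ (u i && v i))

lemma lossSet_card_le (x y u v : Bits n) : (lossSet x y u v).card ≤ n := by
  simpa [lossSet] using Finset.card_filter_le Finset.univ (fun i => xor (x i) (y i) ≠ (u i && v i))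

lemma isoPRB_eq (ε : ℝ) (x y u v : Bits n) :
    isoPRB n ε x y u v =
      (2:ℝ)⁻¹ ^ n * ((1 - ε) ^ (n - (lossSet x y u v).card) * ε ^ (lossSet x y u v).card) := by
  classical
  have hsplit := Finset.card_filter_add_card_filter_not
    (s := (Finset.univ : Finset (Fin n))) (p := fun i => xor (x i) (y i) = (u i && v i))
  simp only [Finset.card_univ, Fintype.card_fin] at hsplit
  have hL : (lossSet x y u v).card = (Finset.univ.filter
      (fun i => ¬ (xor (x i) (y i) = (u i && v i)))).card := rfl
  unfold isoPRB isoPRB1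
  rw [Finset.prod_ite, Finset.prod_const, Finset.prod_const]
  rw [← hL] at hsplit
  have ha : (Finset.univ.filter (fun i => xor (x i) (y i) = (u i && v i))).card
      = n - (lossSet x y u v).card := by omega
  rw [ha]
  have hab : (n - (lossSet x y u v).card) + (lossSet x y u v).card = n := by
    have := lossSet_card_le x y u v; omega
  rw [div_eq_mul_inv, div_eq_mul_inv, mul_pow, mul_pow]
  calc (1 - ε) ^ (n - (lossSet x y u v).card) * (2:ℝ)⁻¹ ^ (n - (lossSet x y u v).card) *
        (ε ^ (lossSet x y u v).card * (2:ℝ)⁻¹ ^ (lossSet x y u v).card)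
      = ((2:ℝ)⁻¹ ^ (n - (lossSet x y u v).card) * (2:ℝ)⁻¹ ^ (lossSet x y u v).card) *
        ((1 - ε) ^ (n - (lossSet x y u v).card) * ε ^ (lossSet x y u v).card) := by ring
    _ = (2:ℝ)⁻¹ ^ n * ((1 - ε) ^ (n - (lossSet x y u v).card) * ε ^ (lossSet x y u v).card) := by
        rw [← pow_add, hab]

/-- Key combinatorial lemma: every deterministic strategy has an input pair on
which at least half of the n CHSH games are lost. -/
lemma exists_heavy (f g : Bits n → Bits n) :
    ∃ u v : Bits n, (n + 1) / 2 ≤ (lossSet (f u) (g v) u v).card := by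
  classical
  obtain ⟨u, v0, v1, hcompl⟩ :
      ∃ u v0 v1 : Bits n,
        lossSet (f u) (g v1) u v1 = (lossSet (f u) (g v0) u v0)ᶜ := by
    refine ⟨fun i => !(xor (g (fun _ => false) i) (g (fun _ => true) i)),
      (fun _ => false), (fun _ => true), ?_⟩
    ext i
    simp only [lossSet, Finset.mem_compl, Finset.mem_filter, Finset.mem_univ, true_and]
    have h : ∀ a b0 b1 : Bool,
        (xor a b1 ≠ ((!(xor b0 b1)) && true)) ↔ ¬(xor a b0 ≠ ((!(xor b0 b1)) && false)) := by
      decide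
    exact h (f _ i) (g (fun _ => false) i) (g (fun _ => true) i)
  have h0 : (lossSet (f u) (g v0) u v0).card ≤ n := lossSet_card_le _ _ _ _
  have h1 : (lossSet (f u) (g v1) u v1).card = n - (lossSet (f u) (g v0) u v0).card := by
    rw [hcompl, Finset.card_compl]
    simp
  by_cases hc : (n + 1) / 2 ≤ (lossSet (f u) (g v0) u v0).card
  · exact ⟨u, v0, hc⟩
  · exact ⟨u, v1, by omega⟩

/-- The equivalence between boolean strings and finsets of coordinates. -/
def bitsEquiv (n : ℕ) : Bits n ≃ Finset (Fin n) where
  toFun s := Finset.univ.filter (fun i => s i = true)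
  invFun A := fun i => decide (i ∈ A)
  left_inv s := by funext i; simp
  right_inv A := by ext i; simp

/-- For each input pair, the total isotropic-box weight of outcomes losing at least
half of the games is the binomial tail. -/
lemma tail_sum (ε : ℝ) (u v : Bits n) :
    ∑ x : Bits n, ∑ y : Bits n,
      (if (n + 1) / 2 ≤ (lossSet x y u v).card then isoPRB n ε x y u v else 0)
      = ∑ k ∈ Finset.Icc ((n + 1) / 2) n, (n.choose k : ℝ) * (1 - ε) ^ (n - k) * ε ^ k := by
  classical
  set Hk : ℕ → ℝ := fun k =>
    if (n + 1) / 2 ≤ k then (2:ℝ)⁻¹ ^ n * ((1 - ε) ^ (n - k) * ε ^ k) else 0 with hHk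
  have hterm : ∀ x y : Bits n,
      (if (n + 1) / 2 ≤ (lossSet x y u v).card then isoPRB n ε x y u v else 0)
        = Hk (lossSet x y u v).card := by
    intro x y
    rw [hHk, isoPRB_eq]
  have hbij : ∀ x : Bits n,
      ∑ y : Bits n, Hk (lossSet x y u v).card
        = ∑ s : Bits n, Hk (Finset.univ.filter (fun i => s i = true)).card := by
    intro x
    apply Fintype.sum_bijective (fun y : Bits n => fun i => xor (y i) (xor (x i) (u i && v i)))
    · apply Function.Involutive.bijective
      intro y
      funext i
      simp [Bool.xor_assoc]
    · intro y
      congr 1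
      congr 1
      ext i
      simp only [lossSet, Finset.mem_filter, Finset.mem_univ, true_and]
      have h : ∀ a b c : Bool, (xor a b ≠ c) ↔ ((xor b (xor a c)) = true) := by decide
      exact h (x i) (y i) (u i && v i)
  have hfin : ∑ s : Bits n, Hk (Finset.univ.filter (fun i => s i = true)).card
      = ∑ A : Finset (Fin n), Hk A.card := by
    apply Fintype.sum_bijective (bitsEquiv n) (bitsEquiv n).bijective
    intro s
    rfl
  have hpow : ∑ A : Finset (Fin n), Hk A.card
      = ∑ j ∈ Finset.range (n + 1), (n.choose j) • Hk j := by
    rw [← Finset.powerset_univ, Finset.sum_powerset_apply_card]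
    simp [Finset.card_univ]
  have hfilter : (Finset.range (n + 1)).filter (fun j => (n + 1) / 2 ≤ j)
      = Finset.Icc ((n + 1) / 2) n := by
    ext j
    simp only [Finset.mem_filter, Finset.mem_range, Finset.mem_Icc]
    omega
  calc ∑ x : Bits n, ∑ y : Bits n,
        (if (n + 1) / 2 ≤ (lossSet x y u v).card then isoPRB n ε x y u v else 0)
      = ∑ x : Bits n, ∑ s : Bits n, Hk (Finset.univ.filter (fun i => s i = true)).card := by
        refine Finset.sum_congr rfl fun x _ => ?_
        rw [← hbij x]
        exact Finset.sum_congr rfl fun y _ => hterm x y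
    _ = (2:ℝ) ^ n * ∑ j ∈ Finset.range (n + 1), (n.choose j) • Hk j := by
        rw [Finset.sum_const, Finset.card_univ, Fintype.card_fun]
        rw [hfin, hpow]
        simp [Fintype.card_fin, Fintype.card_bool, nsmul_eq_mul]
    _ = ∑ k ∈ Finset.Icc ((n + 1) / 2) n, (n.choose k : ℝ) * (1 - ε) ^ (n - k) * ε ^ k := by
        rw [hHk]
        simp only [smul_ite, smul_zero]
        rw [Finset.sum_ite, Finset.sum_const_zero, add_zero, hfilter, Finset.mul_sum]
        refine Finset.sum_congr rfl fun k _ => ?_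
        simp only [nsmul_eq_mul]
        have h2 : (2:ℝ) ^ n * ((2:ℝ)⁻¹ ^ n) = 1 := by
          rw [← mul_pow]; norm_num
        calc (2:ℝ) ^ n * ((n.choose k : ℝ) * ((2:ℝ)⁻¹ ^ n * ((1 - ε) ^ (n - k) * ε ^ k)))
            = ((2:ℝ) ^ n * (2:ℝ)⁻¹ ^ n) * ((n.choose k : ℝ) * ((1 - ε) ^ (n - k) * ε ^ k)) := by
              ring
          _ = (n.choose k : ℝ) * (1 - ε) ^ (n - k) * ε ^ k := by rw [h2]; ring

/-- The "heavy-loss" truncated total sum of a box. -/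
noncomputable def tailSum (n : ℕ) (B : Box n) : ℝ :=
  ∑ u : Bits n, ∑ v : Bits n, ∑ x : Bits n, ∑ y : Bits n,
    if (n + 1) / 2 ≤ (lossSet x y u v).card then B x y u v else 0

lemma detBox_nonneg (f g : Bits n → Bits n) (x y u v : Bits n) :
    (0:ℝ) ≤ detBox f g x y u v := by
  unfold detBox; split <;> norm_num

lemma one_le_tailSum_detBox' (f g : Bits n → Bits n) :
    (1:ℝ) ≤ tailSum n (detBox f g) := by
  classical
  obtain ⟨u0, v0, hheavy⟩ := exists_heavy f g
  have hnn : ∀ x y u v : Bits n,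
      (0:ℝ) ≤ (if (n + 1) / 2 ≤ (lossSet x y u v).card then detBox f g x y u v else 0) := by
    intro x y u v
    split
    · exact detBox_nonneg f g x y u v
    · exact le_refl 0
  have h4 : (1:ℝ) ≤ ∑ y : Bits n,
      (if (n + 1) / 2 ≤ (lossSet (f u0) y u0 v0).card then detBox f g (f u0) y u0 v0 else 0) := by
    have hv : (1:ℝ) =
        (if (n + 1) / 2 ≤ (lossSet (f u0) (g v0) u0 v0).card
          then detBox f g (f u0) (g v0) u0 v0 else 0) := by
      rw [if_pos hheavy]
      simp [detBox]
    rw [hv]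
    exact Finset.single_le_sum (fun y _ => hnn (f u0) y u0 v0) (Finset.mem_univ (g v0))
  have h3 : ∑ y : Bits n,
      (if (n + 1) / 2 ≤ (lossSet (f u0) y u0 v0).card then detBox f g (f u0) y u0 v0 else 0)
      ≤ ∑ x : Bits n, ∑ y : Bits n,
        (if (n + 1) / 2 ≤ (lossSet x y u0 v0).card then detBox f g x y u0 v0 else 0) :=
    Finset.single_le_sum
      (fun x _ => Finset.sum_nonneg fun y _ => hnn x y u0 v0) (Finset.mem_univ (f u0))
  have h2 : ∑ x : Bits n, ∑ y : Bits n,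
        (if (n + 1) / 2 ≤ (lossSet x y u0 v0).card then detBox f g x y u0 v0 else 0)
      ≤ ∑ v : Bits n, ∑ x : Bits n, ∑ y : Bits n,
        (if (n + 1) / 2 ≤ (lossSet x y u0 v).card then detBox f g x y u0 v else 0) :=
    Finset.single_le_sum
      (fun v _ => Finset.sum_nonneg fun x _ => Finset.sum_nonneg fun y _ => hnn x y u0 v)
      (Finset.mem_univ v0)
  have h1 : ∑ v : Bits n, ∑ x : Bits n, ∑ y : Bits n,
        (if (n + 1) / 2 ≤ (lossSet x y u0 v).card then detBox f g x y u0 v else 0)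
      ≤ tailSum n (detBox f g) :=
    Finset.single_le_sum
      (fun u _ => Finset.sum_nonneg fun v _ => Finset.sum_nonneg fun x _ =>
        Finset.sum_nonneg fun y _ => hnn x y u v)
      (Finset.mem_univ u0)
  exact le_trans h4 (le_trans h3 (le_trans h2 h1))

lemma tailSum_combo (p : ℝ) (w : (Bits n → Bits n) × (Bits n → Bits n) → ℝ) (PL : Box n)
    (hwPL : ∀ x y u v : Bits n, PL x y u v =
      ∑ fg : (Bits n → Bits n) × (Bits n → Bits n), w fg * detBox fg.1 fg.2 x y u v) :
    ∑ fg : (Bits n → Bits n) × (Bits n → Bits n), p * w fg * tailSum n (detBox fg.1 fg.2)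
      = tailSum n (fun x y u v => p * PL x y u v) := by
  classical
  unfold tailSum
  simp_rw [Finset.mul_sum, mul_ite, mul_zero]
  rw [Finset.sum_comm]
  refine Finset.sum_congr rfl fun u _ => ?_
  rw [Finset.sum_comm]
  refine Finset.sum_congr rfl fun v _ => ?_
  rw [Finset.sum_comm]
  refine Finset.sum_congr rfl fun x _ => ?_
  rw [Finset.sum_comm]
  refine Finset.sum_congr rfl fun y _ => ?_
  rw [Finset.sum_ite_irrel, Finset.sum_const_zero]
  congr 1
  rw [hwPL, Finset.mul_sum]
  exact Finset.sum_congr rfl fun fg _ => by ring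

end Auxiliary

/-- upper bound on the local part of n isotropic ε-PRBs. -/
theorem stmt13 (n : ℕ) (hn : 1 ≤ n) (ε : ℝ) (hε0 : 0 ≤ ε) (hε : ε ≤ 1 / 4) :
    localPart (isoPRB n ε) ≤
      2 ^ (2 * n) * ∑ i ∈ Finset.Icc ((n + 1) / 2) n,
        (n.choose i : ℝ) * (1 - ε) ^ (n - i) * ε ^ i := by
  classical
  set T : ℝ := ∑ i ∈ Finset.Icc ((n + 1) / 2) n,
      (n.choose i : ℝ) * (1 - ε) ^ (n - i) * ε ^ i with hT
  have hT0 : 0 ≤ T := Finset.sum_nonneg fun i _ =>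
    mul_nonneg (mul_nonneg (Nat.cast_nonneg _) (pow_nonneg (by linarith) _)) (pow_nonneg hε0 _)
  have hRHS0 : (0:ℝ) ≤ 2 ^ (2 * n) * T := mul_nonneg (by positivity) hT0
  apply Real.sSup_le _ hRHS0
  rintro p ⟨hp0, hp1, PL, PNS, hPLbox, ⟨w, hw0, hw1, hwPL⟩, hPNSbox, _, hdecomp⟩
  have hiso : tailSum n (isoPRB n ε) = 2 ^ (2 * n) * T := by
    unfold tailSum
    calc (∑ u : Bits n, ∑ v : Bits n, ∑ x : Bits n, ∑ y : Bits n,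
          if (n + 1) / 2 ≤ (lossSet x y u v).card then isoPRB n ε x y u v else 0)
        = ∑ u : Bits n, ∑ v : Bits n, T :=
          Finset.sum_congr rfl fun u _ => Finset.sum_congr rfl fun v _ => tail_sum ε u v
      _ = ((2 ^ n : ℕ) : ℝ) * (((2 ^ n : ℕ) : ℝ) * T) := by
          rw [Finset.sum_const, Finset.sum_const, Finset.card_univ, Fintype.card_fun]
          simp [nsmul_eq_mul, Fintype.card_fin, Fintype.card_bool]
      _ = 2 ^ (2 * n) * T := by push_cast; rw [two_mul, pow_add]; ring
  calc p = ∑ fg : (Bits n → Bits n) × (Bits n → Bits n), p * w fg := by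
        rw [← Finset.mul_sum, hw1, mul_one]
    _ ≤ ∑ fg : (Bits n → Bits n) × (Bits n → Bits n),
          p * w fg * tailSum n (detBox fg.1 fg.2) :=
        Finset.sum_le_sum fun fg _ =>
          le_mul_of_one_le_right (mul_nonneg hp0 (hw0 fg)) (one_le_tailSum_detBox' fg.1 fg.2)
    _ = tailSum n (fun x y u v => p * PL x y u v) := tailSum_combo p w PL hwPL
    _ ≤ tailSum n (isoPRB n ε) := by
        unfold tailSum
        refine Finset.sum_le_sum fun u _ => Finset.sum_le_sum fun v _ =>
          Finset.sum_le_sum fun x _ => Finset.sum_le_sum fun y _ => ?_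
        dsimp only
        split
        · have h0 : 0 ≤ (1 - p) * PNS x y u v :=
            mul_nonneg (by linarith) (hPNSbox.1 x y u v)
          have h := hdecomp x y u v
          linarith
        · exact le_refl 0
    _ = 2 ^ (2 * n) * T := hiso
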